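/- For a set Σ of fully-existential rules, the oblivious chase terminates on all instances if and only if Σ is bounded for the oblivious chase, i.e., there exists an integer k such that for all instances I, o-chase^k(I, Σ) = o-chase(I, Σ). -/

import Mathlib

namespace ChasePaper

/-- Rules: atoms are (predicate, list of variables). -/
structure Rule (P V : Type) where
  body : List (P × List V)
  head : List (P × List V)

/-- Terms appearing in the chase: constants, (instance) variables, and fresh
variables `z_{(σ,π)}` named by the rule, the existential variable, and a substitution. -/
inductive GTerm (P C V : Type) where
  | const : C → GTerm P C V
  | var   : V → GTerm P C V
  | fresh : Rule P V → V → (V → GTerm P C V) → GTerm P C V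

abbrev GAtom (P C V : Type) := P × List (GTerm P C V)

variable {P C V : Type}

def bodyVars (σ : Rule P V) : List V := σ.body.flatMap Prod.snd
def headVars (σ : Rule P V) : List V := σ.head.flatMap Prod.snd
def frontier [DecidableEq V] (σ : Rule P V) : List V :=
  (bodyVars σ).filter (· ∈ headVars σ)

/-- A rule is datalog if all head variables occur in the body. -/
def IsDatalog (σ : Rule P V) : Prop := ∀ v ∈ headVars σ, v ∈ bodyVars σ
/-- A rule is fully-existential if every head atom contains an existential variable. -/
def IsFE (σ : Rule P V) : Prop := ∀ a ∈ σ.head, ∃ v ∈ a.2, v ∉ bodyVars σ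

def applyAtom (π : V → GTerm P C V) (a : P × List V) : GAtom P C V :=
  (a.1, a.2.map π)

def restrictBody [DecidableEq V] (σ : Rule P V) (π : V → GTerm P C V) : V → GTerm P C V :=
  fun u => if u ∈ bodyVars σ then π u else GTerm.var u

def restrictFr [DecidableEq V] (σ : Rule P V) (π : V → GTerm P C V) : V → GTerm P C V :=
  fun u => if u ∈ frontier σ then π u else GTerm.var u

/-- Oblivious naming of fresh variables: `z_{(σ,π)}`. -/
def extendO [DecidableEq V] (σ : Rule P V) (π : V → GTerm P C V) : V → GTerm P C V :=
  fun v => if v ∈ bodyVars σ then π v else GTerm.fresh σ v (restrictBody σ π)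

/-- Semi-oblivious naming of fresh variables: `z_{(σ,π|fr(σ))}`. -/
def extendSO [DecidableEq V] (σ : Rule P V) (π : V → GTerm P C V) : V → GTerm P C V :=
  fun v => if v ∈ bodyVars σ then π v else GTerm.fresh σ v (restrictFr σ π)

def isTrigger (σ : Rule P V) (π : V → GTerm P C V) (S : Set (GAtom P C V)) : Prop :=
  ∀ a ∈ σ.body, applyAtom π a ∈ S

/-- Breadth-first oblivious chase. -/
def ochase [DecidableEq V] (Rs : Set (Rule P V)) (I : Set (GAtom P C V)) : ℕ → Set (GAtom P C V)
  | 0 => I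
  | i+1 => ochase Rs I i ∪
      {f | ∃ σ ∈ Rs, ∃ π, isTrigger σ π (ochase Rs I i) ∧ ∃ a ∈ σ.head, f = applyAtom (extendO σ π) a}

/-- Breadth-first semi-oblivious chase. -/
def sochase [DecidableEq V] (Rs : Set (Rule P V)) (I : Set (GAtom P C V)) : ℕ → Set (GAtom P C V)
  | 0 => I
  | i+1 => sochase Rs I i ∪
      {f | ∃ σ ∈ Rs, ∃ π, isTrigger σ π (sochase Rs I i) ∧ ∃ a ∈ σ.head, f = applyAtom (extendSO σ π) a}

def ochaseFull [DecidableEq V] (Rs : Set (Rule P V)) (I : Set (GAtom P C V)) : Set (GAtom P C V) :=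
  ⋃ i, ochase Rs I i
def sochaseFull [DecidableEq V] (Rs : Set (Rule P V)) (I : Set (GAtom P C V)) : Set (GAtom P C V) :=
  ⋃ i, sochase Rs I i

/-- Rank of a fact: the smallest breadth-first round at which it appears. -/
noncomputable def rankO [DecidableEq V] (Rs : Set (Rule P V)) (I : Set (GAtom P C V))
    (f : GAtom P C V) : ℕ := sInf {i | f ∈ ochase Rs I i}
noncomputable def rankSO [DecidableEq V] (Rs : Set (Rule P V)) (I : Set (GAtom P C V))
    (f : GAtom P C V) : ℕ := sInf {i | f ∈ sochase Rs I i}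

/-- Rank of a term: the smallest round at which some fact contains it. -/
noncomputable def trankO [DecidableEq V] (Rs : Set (Rule P V)) (I : Set (GAtom P C V))
    (t : GTerm P C V) : ℕ := sInf {i | ∃ f ∈ ochase Rs I i, t ∈ f.2}
noncomputable def trankSO [DecidableEq V] (Rs : Set (Rule P V)) (I : Set (GAtom P C V))
    (t : GTerm P C V) : ℕ := sInf {i | ∃ f ∈ sochase Rs I i, t ∈ f.2}

/-- Existential depth of a term. -/
def depth : GTerm P C V → ℕ
  | .const _ => 0
  | .var _ => 0
  | .fresh σ _ π => 1 + List.foldr (fun v m => max (depth (π v)) m) 0 (bodyVars σ)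

/-- Frontier existential depth of a term. -/
def frdepth [DecidableEq V] : GTerm P C V → ℕ
  | .const _ => 0
  | .var _ => 0
  | .fresh σ _ π =>
      if frontier σ = ([] : List V) then 1
      else 1 + List.foldr (fun v m => max (frdepth (π v)) m) 0 (frontier σ)

/-- Existential depth of a fact: max depth of its terms. -/
def depthF (f : GAtom P C V) : ℕ := List.foldr (fun t m => max (depth t) m) 0 f.2
def frdepthF [DecidableEq V] (f : GAtom P C V) : ℕ :=
  List.foldr (fun t m => max (frdepth t) m) 0 f.2

/-- Active domain of a set of atoms. -/
def adom (S : Set (GAtom P C V)) : Set (GTerm P C V) := {t | ∃ f ∈ S, t ∈ f.2}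

def mapAtom (h : GTerm P C V → GTerm P C V) (f : GAtom P C V) : GAtom P C V :=
  (f.1, f.2.map h)

/-- An embedding from `S` to `S'`: a substitution mapping every atom of `S` into `S'`. -/
def IsEmbedding (h : GTerm P C V → GTerm P C V) (S S' : Set (GAtom P C V)) : Prop :=
  ∀ f ∈ S, mapAtom h f ∈ S'

/-- `I` is an instance w.r.t. an arity function: finite, arity-correct,
and using only constants and variables. -/
def IsInstance (ar : P → ℕ) (I : Set (GAtom P C V)) : Prop :=
  I.Finite ∧ ∀ f ∈ I, f.2.length = ar f.1 ∧
    ∀ t ∈ f.2, (∃ c, t = GTerm.const c) ∨ (∃ v, t = GTerm.var v)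

def RuleOk (ar : P → ℕ) (σ : Rule P V) : Prop :=
  ∀ a ∈ σ.body ++ σ.head, a.2.length = ar a.1

/-- The critical instance over `ar` with special constant `a`. -/
def critical (ar : P → ℕ) (a : C) : Set (GAtom P C V) :=
  {f | f.2 = List.replicate (ar f.1) (GTerm.const a)}


section Aux

variable {α : Type*}

private lemma foldr_max_ge {f : α → ℕ} : ∀ {l : List α} {u : α}, u ∈ l →
    f u ≤ List.foldr (fun v m => max (f v) m) 0 l := by
  intro l
  induction l with
  | nil => intro u hu; cases hu
  | cons x xs ih =>
    intro u hu
    rcases List.mem_cons.mp hu with h | h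
    · subst h; exact le_max_left _ _
    · exact le_trans (ih h) (le_max_right _ _)

private lemma foldr_max_le {f : α → ℕ} {n : ℕ} : ∀ {l : List α}, (∀ u ∈ l, f u ≤ n) →
    List.foldr (fun v m => max (f v) m) 0 l ≤ n := by
  intro l
  induction l with
  | nil => intro _; simp
  | cons x xs ih =>
    intro h
    simp only [List.foldr_cons]
    exact max_le (h x List.mem_cons_self) (ih fun u hu => h u (List.mem_cons_of_mem _ hu))

private lemma foldr_max_congr {f g : α → ℕ} : ∀ {l : List α}, (∀ u ∈ l, f u = g u) →
    List.foldr (fun v m => max (f v) m) 0 l = List.foldr (fun v m => max (g v) m) 0 l := by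
  intro l
  induction l with
  | nil => intro _; rfl
  | cons x xs ih =>
    intro h
    simp only [List.foldr_cons, h x List.mem_cons_self,
      ih fun u hu => h u (List.mem_cons_of_mem _ hu)]

end Aux

/-- The canonical homomorphism to the critical instance: base terms go to `const a`,
fresh terms are preserved structurally. -/
def hcrit [DecidableEq V] (a : C) : GTerm P C V → GTerm P C V
  | .const _ => .const a
  | .var _ => .const a
  | .fresh σ v π => .fresh σ v (fun u => if u ∈ bodyVars σ then hcrit a (π u) else .var u)

lemma depth_hcrit [DecidableEq V] (a : C) : ∀ t : GTerm P C V, depth (hcrit a t) = depth t := by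
  intro t
  induction t with
  | const c => rfl
  | var v => rfl
  | fresh σ v π ih =>
    simp only [hcrit, depth]
    congr 1
    apply foldr_max_congr
    intro u hu
    rw [if_pos hu, ih u]

lemma hcrit_extendO [DecidableEq V] (a : C) (σ : Rule P V) (π : V → GTerm P C V) (v : V) :
    hcrit a (extendO σ π v) = extendO σ (fun u => hcrit a (π u)) v := by
  unfold extendO
  by_cases hv : v ∈ bodyVars σ
  · simp [hv]
  · simp only [hv, if_false, hcrit]
    congr 1
    funext u
    unfold restrictBody
    by_cases hu : u ∈ bodyVars σ <;> simp [hu]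

lemma mapAtom_applyAtom [DecidableEq V] (h : GTerm P C V → GTerm P C V)
    (π : V → GTerm P C V) (b : P × List V) :
    mapAtom h (applyAtom π b) = applyAtom (fun v => h (π v)) b := by
  simp [mapAtom, applyAtom, List.map_map, Function.comp]

lemma ochase_le_succ [DecidableEq V] (Rs : Set (Rule P V)) (I : Set (GAtom P C V)) (i : ℕ) :
    ochase Rs I i ⊆ ochase Rs I (i + 1) := by
  intro f hf
  exact Set.mem_union_left _ hf

lemma ochase_mono [DecidableEq V] (Rs : Set (Rule P V)) (I : Set (GAtom P C V)) {i j : ℕ}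
    (hij : i ≤ j) : ochase Rs I i ⊆ ochase Rs I j := by
  induction j, hij using Nat.le_induction with
  | base => exact subset_rfl
  | succ j hj ih => exact ih.trans (ochase_le_succ Rs I j)

lemma ochase_stab [DecidableEq V] (Rs : Set (Rule P V)) (I : Set (GAtom P C V)) {k : ℕ}
    (h : ochase Rs I (k + 1) ⊆ ochase Rs I k) :
    ∀ j, k ≤ j → ochase Rs I j = ochase Rs I k := by
  intro j hj
  induction j, hj using Nat.le_induction with
  | base => rfl
  | succ j hj ih =>
    apply Set.Subset.antisymm
    · intro f hf
      rcases hf with hf | ⟨σ, hσ, π, htrig, b, hb, rfl⟩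
      · rw [← ih]; exact hf
      · apply h
        rw [ih] at htrig
        exact Set.mem_union_right _ ⟨σ, hσ, π, htrig, b, hb, rfl⟩
    · rw [← ih]; exact ochase_le_succ Rs I j

lemma ochaseFull_eq_of_stab [DecidableEq V] (Rs : Set (Rule P V)) (I : Set (GAtom P C V)) {k : ℕ}
    (h : ochase Rs I (k + 1) ⊆ ochase Rs I k) :
    ochase Rs I k = ochaseFull Rs I := by
  apply Set.Subset.antisymm
  · exact Set.subset_iUnion (ochase Rs I) k
  · apply Set.iUnion_subset
    intro i
    rcases le_or_gt i k with hik | hik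
    · exact ochase_mono Rs I hik
    · rw [ochase_stab Rs I h i hik.le]

/-- The homomorphism `hcrit` maps each level of the chase of an instance into the
corresponding level of the chase of the critical instance. -/
lemma hom_chase [DecidableEq V] (ar : P → ℕ) (a : C) (Rs : Set (Rule P V))
    {I : Set (GAtom P C V)} (hI : IsInstance ar I) :
    ∀ i, ∀ f ∈ ochase Rs I i, mapAtom (hcrit a) f ∈ ochase Rs (critical ar a) i := by
  intro i
  induction i with
  | zero =>
    intro f hf
    have h := hI.2 f hf
    show (mapAtom (hcrit a) f).2 = List.replicate (ar (mapAtom (hcrit a) f).1) (GTerm.const a)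
    simp only [mapAtom]
    rw [List.eq_replicate_iff]
    constructor
    · simpa using h.1
    · intro t ht
      rcases List.mem_map.mp ht with ⟨s, hs, rfl⟩
      rcases h.2 s hs with ⟨c, rfl⟩ | ⟨v, rfl⟩ <;> rfl
  | succ i ih =>
    intro f hf
    rcases hf with hf | ⟨σ, hσ, π, htrig, b, hb, rfl⟩
    · exact Set.mem_union_left _ (ih f hf)
    · refine Set.mem_union_right _ ⟨σ, hσ, fun u => hcrit a (π u), ?_, b, hb, ?_⟩
      · intro c hc
        have := ih _ (htrig c hc)
        rwa [mapAtom_applyAtom] at this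
      · rw [mapAtom_applyAtom]
        unfold applyAtom
        exact congrArg _ (List.map_congr_left fun v _ => hcrit_extendO a σ π v)

/-- Upper bound: all terms at level `i` of the chase of a depth-0 base have depth ≤ `i`. -/
lemma depth_bound [DecidableEq V] (Rs : Set (Rule P V)) {S : Set (GAtom P C V)}
    (h0 : ∀ f ∈ S, ∀ t ∈ f.2, depth t = 0) :
    ∀ i, ∀ f ∈ ochase Rs S i, ∀ t ∈ f.2, depth t ≤ i := by
  intro i
  induction i with
  | zero => intro f hf t ht; exact le_of_eq (h0 f hf t ht)
  | succ i ih =>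
    intro f hf t ht
    rcases hf with hf | ⟨σ, hσ, π, htrig, b, hb, rfl⟩
    · exact (ih f hf t ht).trans (Nat.le_succ i)
    · simp only [applyAtom] at ht
      rcases List.mem_map.mp ht with ⟨v, hv, rfl⟩
      have key : ∀ u ∈ bodyVars σ, depth (π u) ≤ i := by
        intro u hu
        rcases List.mem_flatMap.mp hu with ⟨c, hc, huc⟩
        exact ih _ (htrig c hc) (π u) (List.mem_map.mpr ⟨u, huc, rfl⟩)
      unfold extendO
      by_cases hv' : v ∈ bodyVars σ
      · rw [if_pos hv']; exact (key v hv').trans (Nat.le_succ i)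
      · rw [if_neg hv']
        show 1 + _ ≤ i + 1
        have hle : List.foldr (fun u m => max (depth (restrictBody σ π u)) m) 0 (bodyVars σ) ≤ i := by
          apply foldr_max_le
          intro u hu
          unfold restrictBody
          rw [if_pos hu]
          exact key u hu
        omega

/-- Lower bound: for fully-existential rules, a fact new at level `i+1`
contains a term of depth at least `i+1`. -/
lemma new_depth [DecidableEq V] (Rs : Set (Rule P V)) (I : Set (GAtom P C V))
    (hFE : ∀ σ ∈ Rs, IsFE σ) :
    ∀ i, ∀ f ∈ ochase Rs I (i + 1), f ∉ ochase Rs I i → ∃ t ∈ f.2, i + 1 ≤ depth t := by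
  intro i
  induction i with
  | zero =>
    intro f hf hnf
    rcases hf with hf | ⟨σ, hσ, π, htrig, b, hb, rfl⟩
    · exact absurd hf hnf
    · rcases hFE σ hσ b hb with ⟨v, hv, hvb⟩
      refine ⟨extendO σ π v, List.mem_map.mpr ⟨v, hv, rfl⟩, ?_⟩
      unfold extendO
      rw [if_neg hvb]
      show 0 + 1 ≤ 1 + _
      omega
  | succ i ih =>
    intro f hf hnf
    rcases hf with hf | ⟨σ, hσ, π, htrig, b, hb, rfl⟩
    · exact absurd hf hnf
    · by_cases hprev : isTrigger σ π (ochase Rs I i)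
      · have hmem : applyAtom (extendO σ π) b ∈ ochase Rs I (i + 1) :=
          Set.mem_union_right _ ⟨σ, hσ, π, hprev, b, hb, rfl⟩
        exact absurd hmem hnf
      · obtain ⟨c, hc, hcnot⟩ : ∃ c ∈ σ.body, applyAtom π c ∉ ochase Rs I i := by
          by_contra h
          push_neg at h
          exact hprev h
        obtain ⟨t, ht, hdt⟩ := ih (applyAtom π c) (htrig c hc) hcnot
        simp only [applyAtom] at ht
        rcases List.mem_map.mp ht with ⟨u, hu, rfl⟩
        have hub : u ∈ bodyVars σ := List.mem_flatMap.mpr ⟨c, hc, hu⟩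
        rcases hFE σ hσ b hb with ⟨v, hv, hvb⟩
        refine ⟨extendO σ π v, List.mem_map.mpr ⟨v, hv, rfl⟩, ?_⟩
        unfold extendO
        rw [if_neg hvb]
        show i + 1 + 1 ≤ 1 + _
        have h1 : depth (restrictBody σ π u) ≤
            List.foldr (fun w m => max (depth (restrictBody σ π w)) m) 0 (bodyVars σ) :=
          foldr_max_ge (f := fun w => depth (restrictBody σ π w)) hub
        have h2 : restrictBody σ π u = π u := by unfold restrictBody; rw [if_pos hub]
        rw [h2] at h1
        omega

/-- for fully-existential rules, termination of the oblivious chase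
on all instances is equivalent to boundedness of the oblivious chase. -/
theorem statement5 {P C V : Type} [DecidableEq V] [Finite P] (ar : P → ℕ) (a : C)
    (Rs : Set (Rule P V)) (hFE : ∀ σ ∈ Rs, IsFE σ) (hRs : ∀ σ ∈ Rs, RuleOk ar σ) :
    (∀ I : Set (GAtom P C V), IsInstance ar I →
        ∃ k, ochase Rs I k = ochaseFull Rs I) ↔
    (∃ k, ∀ I : Set (GAtom P C V), IsInstance ar I →
        ochase Rs I k = ochaseFull Rs I) := by
  constructor
  · intro H
    have hcritInst : IsInstance ar (critical (V := V) ar a) := by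
      constructor
      · apply Set.Finite.subset (Set.finite_range
          (fun p : P => ((p, List.replicate (ar p) (GTerm.const a)) : GAtom P C V)))
        intro f hf
        exact ⟨f.1, Prod.ext rfl hf.symm⟩
      · intro f hf
        refine ⟨by rw [hf]; simp, ?_⟩
        intro t ht
        rw [hf] at ht
        exact Or.inl ⟨a, List.eq_of_mem_replicate ht⟩
    obtain ⟨k, hk⟩ := H (critical ar a) hcritInst
    have hsub : ochase Rs (critical ar a) (k + 1) ⊆ ochase Rs (critical ar a) k := by
      rw [hk]; exact Set.subset_iUnion _ (k + 1)
    have h0 : ∀ f ∈ critical (V := V) ar a, ∀ t ∈ f.2, depth t = 0 := by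
      intro f hf t ht
      rw [hf] at ht
      rw [List.eq_of_mem_replicate ht]
      rfl
    refine ⟨k, fun I hI => ?_⟩
    have hIsub : ochase Rs I (k + 1) ⊆ ochase Rs I k := by
      intro f hf
      by_contra hnf
      obtain ⟨t, ht, hdt⟩ := new_depth Rs I hFE k f hf hnf
      have h1 : mapAtom (hcrit a) f ∈ ochase Rs (critical ar a) (k + 1) :=
        hom_chase ar a Rs hI (k + 1) f hf
      have h2 := hsub h1
      have h3 : hcrit a t ∈ (mapAtom (hcrit a) f).2 := List.mem_map.mpr ⟨t, ht, rfl⟩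
      have h4 := depth_bound Rs h0 k _ h2 _ h3
      rw [depth_hcrit] at h4
      omega
    exact ochaseFull_eq_of_stab Rs I hIsub
  · rintro ⟨k, hk⟩ I hI
    exact ⟨k, hk I hI⟩

end ChasePaper
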